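/- Let {v¹,…,vʳ} ∪ {w¹,…,wˢ} ⊂ ℝⁿ be positive-linearly independent, i.e., the only solution of 0 = Σᵢ αᵢvⁱ + Σⱼ βⱼwʲ with α ≥ 0 is α = 0, β = 0. Then there exists ε > 0 such that for all perturbations ṽⁱ, w̃ʲ with Euclidean norm at most ε, the union {v¹+ṽ¹,…,vʳ+ṽʳ} ∪ {w¹+w̃¹,…,wˢ+w̃ˢ} is also positive-linearly independent. -/

import Mathlib

open Finset

/-- Positive-linear independence of the union of two finite families of vectors in ℝⁿ. -/
def PosLinIndep {n r s : ℕ} (v : Fin r → EuclideanSpace ℝ (Fin n))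
    (w : Fin s → EuclideanSpace ℝ (Fin n)) : Prop :=
  ∀ (α : Fin r → ℝ) (β : Fin s → ℝ), (∀ i, 0 ≤ α i) →
    (∑ i, α i • v i) + (∑ j, β j • w j) = 0 → α = 0 ∧ β = 0

theorem posLinIndep_stable {n r s : ℕ} (v : Fin r → EuclideanSpace ℝ (Fin n))
    (w : Fin s → EuclideanSpace ℝ (Fin n)) (h : PosLinIndep v w) :
    ∃ ε > (0 : ℝ), ∀ (vp : Fin r → EuclideanSpace ℝ (Fin n))
      (wp : Fin s → EuclideanSpace ℝ (Fin n)),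
      (∀ i, ‖vp i‖ ≤ ε) → (∀ j, ‖wp j‖ ≤ ε) →
      PosLinIndep (fun i => v i + vp i) (fun j => w j + wp j) := by
  classical
  set T : ((Fin r → ℝ) × (Fin s → ℝ)) → EuclideanSpace ℝ (Fin n) :=
    fun p => (∑ i, p.1 i • v i) + (∑ j, p.2 j • w j) with hT
  set S : ((Fin r → ℝ) × (Fin s → ℝ)) → ℝ :=
    fun p => (∑ i, |p.1 i|) + (∑ j, |p.2 j|) with hS
  set K : Set ((Fin r → ℝ) × (Fin s → ℝ)) :=
    {p | (∀ i, 0 ≤ p.1 i) ∧ S p = 1} with hK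
  have hTcont : Continuous T := by
    apply Continuous.add
    · exact continuous_finset_sum _ fun i _ =>
        (((continuous_apply i).comp continuous_fst).smul continuous_const)
    · exact continuous_finset_sum _ fun j _ =>
        (((continuous_apply j).comp continuous_snd).smul continuous_const)
  have hScont : Continuous S := by
    apply Continuous.add
    · exact continuous_finset_sum _ fun i _ =>
        ((continuous_apply i).comp continuous_fst).abs
    · exact continuous_finset_sum _ fun j _ =>
        ((continuous_apply j).comp continuous_snd).abs
  -- K is compact
  have hKclosed : IsClosed K := by
    have hKeq : K = (⋂ i, {p : (Fin r → ℝ) × (Fin s → ℝ) | 0 ≤ p.1 i}) ∩ {p | S p = 1} := by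
      ext p; simp [hK, Set.mem_iInter]
    rw [hKeq]
    exact (isClosed_iInter fun i =>
      isClosed_le continuous_const ((continuous_apply i).comp continuous_fst)).inter
      (isClosed_eq hScont continuous_const)
  have hKbdd : Bornology.IsBounded K := by
    apply Bornology.IsBounded.subset (Metric.isBounded_closedBall (x := 0) (r := 1))
    intro p hp
    simp only [Metric.mem_closedBall, dist_zero_right]
    rw [Prod.norm_def]
    have h1 : S p = 1 := hp.2
    have hmem : ∀ i, |p.1 i| ≤ 1 := by
      intro i
      rw [← h1]
      have := Finset.single_le_sum (f := fun i => |p.1 i|)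
        (fun i _ => abs_nonneg _) (Finset.mem_univ i)
      have : |p.1 i| ≤ ∑ i, |p.1 i| := this
      have h2 : 0 ≤ ∑ j, |p.2 j| := Finset.sum_nonneg fun j _ => abs_nonneg _
      simp only [hS]; linarith
    have hmem2 : ∀ j, |p.2 j| ≤ 1 := by
      intro j
      rw [← h1]
      have := Finset.single_le_sum (f := fun j => |p.2 j|)
        (fun j _ => abs_nonneg _) (Finset.mem_univ j)
      have h2 : 0 ≤ ∑ i, |p.1 i| := Finset.sum_nonneg fun i _ => abs_nonneg _
      simp only [hS]; linarith
    apply max_le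
    · exact pi_norm_le_iff_of_nonneg zero_le_one |>.2 fun i => by
        simpa [Real.norm_eq_abs] using hmem i
    · exact pi_norm_le_iff_of_nonneg zero_le_one |>.2 fun j => by
        simpa [Real.norm_eq_abs] using hmem2 j
  have hKcompact : IsCompact K := Metric.isCompact_of_isClosed_isBounded hKclosed hKbdd
  -- a uniform positive lower bound on ‖T p‖ over K
  have hTpos : ∀ p ∈ K, 0 < ‖T p‖ := by
    intro p hp
    rw [norm_pos_iff]
    intro hzero
    obtain ⟨ha, hb⟩ := h p.1 p.2 hp.1 hzero
    have : S p = 0 := by simp [hS, ha, hb]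
    rw [hp.2] at this; exact one_ne_zero this
  obtain ⟨m, hm, hmin⟩ : ∃ m > (0 : ℝ), ∀ p ∈ K, m ≤ ‖T p‖ := by
    rcases Set.eq_empty_or_nonempty K with he | hne
    · exact ⟨1, one_pos, fun p hp => by rw [he] at hp; exact hp.elim⟩
    · obtain ⟨p₀, hp₀, hmin⟩ := hKcompact.exists_isMinOn hne (hTcont.norm.continuousOn)
      exact ⟨‖T p₀‖, hTpos p₀ hp₀, fun p hp => hmin hp⟩
  refine ⟨m / 2, by linarith, ?_⟩
  intro vp wp hvp hwp α β hα heq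
  -- let c be the ℓ¹ norm of (α, β)
  set c : ℝ := (∑ i, |α i|) + (∑ j, |β j|) with hc
  have hc0 : 0 ≤ c := add_nonneg (Finset.sum_nonneg fun i _ => abs_nonneg _)
    (Finset.sum_nonneg fun j _ => abs_nonneg _)
  rcases eq_or_lt_of_le hc0 with hceq | hcpos
  · -- c = 0, so α = β = 0
    have h1 : ∑ i, |α i| = 0 ∧ ∑ j, |β j| = 0 := by
      constructor <;> nlinarith [Finset.sum_nonneg (fun i (_ : i ∈ Finset.univ) => abs_nonneg (α i)),
        Finset.sum_nonneg (fun j (_ : j ∈ Finset.univ) => abs_nonneg (β j))]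
    constructor
    · funext i
      have := (Finset.sum_eq_zero_iff_of_nonneg (fun i _ => abs_nonneg (α i))).1 h1.1 i
        (Finset.mem_univ i)
      simpa using abs_eq_zero.1 this
    · funext j
      have := (Finset.sum_eq_zero_iff_of_nonneg (fun j _ => abs_nonneg (β j))).1 h1.2 j
        (Finset.mem_univ j)
      simpa using abs_eq_zero.1 this
  · exfalso
    have hcne : c ≠ 0 := ne_of_gt hcpos
    set p' : (Fin r → ℝ) × (Fin s → ℝ) := (fun i => α i / c, fun j => β j / c) with hp'
    have hp'K : p' ∈ K := by
      constructor
      · exact fun i => div_nonneg (hα i) hc0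
      · simp only [hS, hp']
        have h1 : ∀ i, |α i / c| = |α i| / c := fun i => by
          rw [abs_div, abs_of_pos hcpos]
        have h2 : ∀ j, |β j / c| = |β j| / c := fun j => by
          rw [abs_div, abs_of_pos hcpos]
        simp only [h1, h2, ← Finset.sum_div]
        field_simp
        exact hc.symm
    -- rewrite the perturbed equation
    have heq' : T (α, β) = -((∑ i, α i • vp i) + (∑ j, β j • wp j)) := by
      have : (∑ i, α i • (v i + vp i)) + (∑ j, β j • (w j + wp j)) = 0 := heq
      simp only [smul_add, Finset.sum_add_distrib] at this
      simp only [hT]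
      rw [eq_neg_iff_add_eq_zero]
      linear_combination (norm := abel) this
    have hTp' : T p' = c⁻¹ • T (α, β) := by
      simp only [hT, hp', smul_smul, div_eq_inv_mul]
      rw [smul_add, Finset.smul_sum, Finset.smul_sum]
      simp [smul_smul]
    have hbound : ‖T p'‖ ≤ m / 2 := by
      rw [hTp', heq', norm_smul, norm_neg]
      have h1 : ‖(∑ i, α i • vp i) + (∑ j, β j • wp j)‖ ≤ c * (m / 2) := by
        calc ‖(∑ i, α i • vp i) + (∑ j, β j • wp j)‖
            ≤ ‖∑ i, α i • vp i‖ + ‖∑ j, β j • wp j‖ := norm_add_le _ _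
          _ ≤ (∑ i, ‖α i • vp i‖) + (∑ j, ‖β j • wp j‖) :=
              add_le_add (norm_sum_le _ _) (norm_sum_le _ _)
          _ ≤ (∑ i, |α i| * (m / 2)) + (∑ j, |β j| * (m / 2)) := by
              apply add_le_add <;> apply Finset.sum_le_sum <;> intro i _
              · rw [norm_smul, Real.norm_eq_abs]
                exact mul_le_mul_of_nonneg_left (hvp i) (abs_nonneg _)
              · rw [norm_smul, Real.norm_eq_abs]
                exact mul_le_mul_of_nonneg_left (hwp i) (abs_nonneg _)
          _ = c * (m / 2) := by rw [← Finset.sum_mul, ← Finset.sum_mul, ← add_mul]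
      calc ‖(c : ℝ)⁻¹‖ * ‖(∑ i, α i • vp i) + (∑ j, β j • wp j)‖
          ≤ ‖(c : ℝ)⁻¹‖ * (c * (m / 2)) := by
            apply mul_le_mul_of_nonneg_left h1 (norm_nonneg _)
        _ = m / 2 := by
            rw [Real.norm_eq_abs, abs_inv, abs_of_pos hcpos]
            field_simp
    have := hmin p' hp'K
    linarith
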